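/- The set of pairs (t₀, t₁) ∈ ℝ² such that (t₀ - t₁)/π ∈ ℚ and sin((t₀ - t₁)·√(k² + q)) ≠ 0 for all positive integers k, is dense in ℝ². -/

import Mathlib

set_option maxHeartbeats 1000000 in
lemma lemA (q : ℝ) (hq : 0 < q) :
    ∃ M : ℕ, 0 < M ∧ ∀ k : ℕ, 1 ≤ k → ∀ r : ℚ, r ≠ 0 → ∀ n : ℤ,
      (r : ℝ) * Real.sqrt ((k : ℝ) ^ 2 + q) = (n : ℝ) → ∃ j : ℤ, r * (M : ℚ) = (j : ℚ) := by
  by_cases hQ : ∃ Q : ℚ, (Q : ℝ) = q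
  · obtain ⟨Q, hQq⟩ := hQ
    have hQ0 : 0 < Q := by
      have : (0:ℝ) < (Q:ℝ) := hQq ▸ hq
      exact_mod_cast this
    set u : ℤ := Q.num with hu_def
    set v : ℕ := Q.den with hv_def
    have hu : 0 < u := Rat.num_pos.mpr hQ0
    have hv : 0 < (v:ℤ) := by exact_mod_cast Q.pos
    have hQuv : (u : ℚ) = Q * (v : ℚ) := by
      rw [hu_def, hv_def]
      field_simp [Rat.num_div_den]
      exact (Rat.mul_den_eq_num Q).symm
    refine ⟨((v : ℤ) * u + u).toNat.factorial, Nat.factorial_pos _, ?_⟩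
    intro k hk r hr n hn
    have hk1 : (1:ℝ) ≤ (k:ℝ) := by exact_mod_cast hk
    have hsum : 0 < (k:ℝ)^2 + q := by positivity
    have hsqrt : 0 < Real.sqrt ((k:ℝ)^2 + q) := Real.sqrt_pos.mpr hsum
    have hsq : Real.sqrt ((k:ℝ)^2 + q) ^ 2 = (k:ℝ)^2 + q := Real.sq_sqrt hsum.le
    set c : ℚ := (n / r) * (v : ℚ) with hc
    have hrR : ((r:ℝ)) ≠ 0 := by exact_mod_cast hr
    have hcr : (c : ℝ) = Real.sqrt ((k:ℝ)^2 + q) * (v : ℝ) := by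
      rw [hc]
      push_cast
      rw [← hn]
      field_simp
    -- c^2 is an integer
    have hc2 : (c^2 : ℚ) = (((v:ℤ)^2 * (k:ℤ)^2 + u * (v:ℤ) : ℤ) : ℚ) := by
      have : ((c^2 : ℚ) : ℝ) = ((((v:ℤ)^2 * (k:ℤ)^2 + u * (v:ℤ) : ℤ) : ℚ) : ℝ) := by
        push_cast
        rw [hcr]
        have huv : (u : ℝ) = q * (v : ℝ) := by
          have := congrArg (fun z : ℚ => (z : ℝ)) hQuv
          push_cast at this
          rw [this, hQq]
        nlinarith [hsq]
      exact_mod_cast this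
    have hcden : c.den = 1 := by
      have h1 : (c^2).den = 1 := by rw [hc2]; exact Rat.den_intCast _
      have h2 : (c^2).den = c.den ^ 2 := Rat.den_pow c 2
      have := h1 ▸ h2
      nlinarith [c.pos]
    obtain ⟨a, ha⟩ : ∃ a : ℤ, (a : ℚ) = c := ⟨c.num, Rat.coe_int_num_of_den_eq_one hcden⟩
    have ha2 : a^2 = (v:ℤ)^2 * (k:ℤ)^2 + u * (v:ℤ) := by
      have : ((a:ℚ))^2 = (((v:ℤ)^2 * (k:ℤ)^2 + u * (v:ℤ) : ℤ) : ℚ) := by rw [ha]; exact hc2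
      exact_mod_cast this
    have ha0 : 0 < a := by
      have : (0:ℝ) < (c:ℝ) := by rw [hcr]; positivity
      have hc0 : 0 < c := by exact_mod_cast this
      have : (0:ℚ) < (a:ℚ) := ha ▸ hc0
      exact_mod_cast this
    have hkZ : (1:ℤ) ≤ (k:ℤ) := by exact_mod_cast hk
    -- a > v*k
    have hvk : (v:ℤ) * k + 1 ≤ a := by nlinarith
    have huvk : 2 * (v:ℤ) * k + 1 ≤ u * v := by
      have h1 : ((v:ℤ)*k+1) * ((v:ℤ)*k+1) ≤ a * a :=
        mul_le_mul hvk hvk (by positivity) ha0.le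
      nlinarith [h1, ha2]
    have hku : (k:ℤ) ≤ u := by
      by_contra h
      push_neg at h
      have h1 : u ≤ (k:ℤ) - 1 := by omega
      have h2 : u * v ≤ ((k:ℤ) - 1) * v := mul_le_mul_of_nonneg_right h1 hv.le
      nlinarith [mul_pos hv (show (0:ℤ) < (k:ℤ) by omega)]
    have hB0 : (0:ℤ) < (v:ℤ) * k + u := by positivity
    have key : (0:ℤ) ≤ u * (2*(v:ℤ)*k + u - (v:ℤ)) :=
      mul_nonneg hu.le (by nlinarith)
    have hsq2 : a^2 ≤ ((v:ℤ)*k + u)^2 := by nlinarith [key, ha2]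
    have havku : a ≤ (v:ℤ)*k + u := by nlinarith [hsq2, ha0, hB0]
    have haA : a ≤ (v:ℤ) * u + u := by
      have : (v:ℤ) * k ≤ (v:ℤ) * u := mul_le_mul_of_nonneg_left hku hv.le
      linarith
    -- a divides the factorial
    have haNat : a.natAbs ≤ ((v:ℤ) * u + u).toNat := by omega
    have hdvdNat : a.natAbs ∣ ((v:ℤ) * u + u).toNat.factorial :=
      Nat.dvd_factorial (by omega) haNat
    have hdvd : a ∣ ((((v:ℤ) * u + u).toNat.factorial : ℤ)) := by
      rw [← Int.natAbs_dvd]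
      exact_mod_cast hdvdNat
    obtain ⟨d, hd⟩ := hdvd
    have hrc : r * c = (n : ℚ) * (v : ℚ) := by
      rw [hc]; field_simp
    refine ⟨n * v * d, ?_⟩
    have : (((((v:ℤ) * u + u).toNat.factorial : ℕ)) : ℚ) = ((a : ℚ)) * ((d : ℚ)) := by
      exact_mod_cast congrArg (fun z : ℤ => (z : ℚ)) hd
    rw [this, ha, ← mul_assoc, hrc]
    push_cast
    ring
  · refine ⟨1, one_pos, ?_⟩
    intro k hk r hr n hn
    exfalso
    have hsum : 0 < (k:ℝ)^2 + q := by positivity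
    have hsq : Real.sqrt ((k:ℝ)^2 + q) ^ 2 = (k:ℝ)^2 + q := Real.sq_sqrt hsum.le
    have hrR : ((r:ℝ)) ≠ 0 := by exact_mod_cast hr
    refine hQ ⟨(n/r)^2 - (k:ℚ)^2, ?_⟩
    have hs : ((n:ℝ)/(r:ℝ)) = Real.sqrt ((k:ℝ)^2 + q) := by
      rw [← hn]; field_simp
    push_cast
    rw [hs, hsq]; ring

theorem stmt_8 (q : ℝ) (hq : 0 < q) :
    Dense {p : ℝ × ℝ | (∃ r : ℚ, (p.1 - p.2) / Real.pi = (r : ℝ)) ∧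
      ∀ k : ℕ, 1 ≤ k → Real.sin ((p.1 - p.2) * Real.sqrt ((k : ℝ) ^ 2 + q)) ≠ 0} := by
  obtain ⟨M, hM, hMkey⟩ := lemA q hq
  rw [Metric.dense_iff]
  intro p ε hε
  obtain ⟨t, ht⟩ := pow_unbounded_of_one_lt (Real.pi / ε) one_lt_two
  set D : ℕ := 2 ^ (t+1) * M with hD
  have hDnat : 2 ^ t ≤ D := by
    calc 2^t ≤ 2^(t+1) := Nat.pow_le_pow_right (by norm_num) (Nat.le_succ t)
      _ ≤ 2^(t+1) * M := Nat.le_mul_of_pos_right _ hM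
  have hD0 : 0 < (D:ℝ) := by
    have : 0 < D := lt_of_lt_of_le (Nat.pow_pos (n := t) (by norm_num)) hDnat
    exact_mod_cast this
  set δ : ℝ := Real.pi / D with hδ
  have hδ0 : 0 < δ := by rw [hδ]; positivity
  have h2t : (0:ℝ) < 2^t := by positivity
  have hδε : δ < ε := by
    have hπ : Real.pi < ε * 2^t := by
      rw [div_lt_iff₀ hε] at ht; linarith
    have hcast : (2:ℝ)^t ≤ (D:ℝ) := by exact_mod_cast hDnat
    calc δ = Real.pi / D := hδ
      _ ≤ Real.pi / 2^t := by gcongr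
      _ < ε := by rw [div_lt_iff₀ h2t]; linarith
  set x : ℝ := p.1 - p.2 with hx
  set m : ℤ := 2 * ⌊x / (2*δ)⌋ + 1 with hm
  have hmodd : Odd m := Int.odd_iff.mpr (by omega)
  set r : ℚ := (m : ℚ) / (D : ℚ) with hr
  clear_value D δ x m r
  have hDQ : ((D:ℚ)) ≠ 0 := by
    have : (0:ℚ) < D := by exact_mod_cast hD0
    exact this.ne'
  have hr0 : r ≠ 0 := by
    rw [hr, div_ne_zero_iff]
    refine ⟨?_, hDQ⟩
    intro h
    have : m = 0 := by exact_mod_cast h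
    omega
  have hrpi : (r:ℝ) * Real.pi = (m:ℝ) * δ := by
    have hrR : (r:ℝ) = (m:ℝ) / (D:ℝ) := by rw [hr]; push_cast; ring
    rw [hrR, hδ]; ring
  have h1 : (⌊x / (2*δ)⌋ : ℝ) * (2*δ) ≤ x := by
    have := Int.floor_le (x / (2*δ))
    rwa [le_div_iff₀ (by positivity)] at this
  have h2 : x < ((⌊x / (2*δ)⌋ : ℝ) + 1) * (2*δ) := by
    have := Int.lt_floor_add_one (x / (2*δ))
    rwa [div_lt_iff₀ (by positivity)] at this
  have hdist : |(m:ℝ) * δ - x| ≤ δ := by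
    rw [abs_le, hm]
    push_cast
    constructor
    · nlinarith [h1, h2]
    · nlinarith [h1, h2]
  refine ⟨(p.2 + (r:ℝ) * Real.pi, p.2), ?_, ?_⟩
  · rw [Metric.mem_ball, Prod.dist_eq]
    apply max_lt
    · have harg : p.2 + (r:ℝ) * Real.pi - p.1 = (m:ℝ) * δ - x := by
        rw [hrpi, hx]; ring
      rw [Real.dist_eq, harg]
      exact lt_of_le_of_lt hdist hδε
    · simpa using hε
  · have hxdiff : (p.2 + (r:ℝ) * Real.pi, p.2).1 - (p.2 + (r:ℝ) * Real.pi, p.2).2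
        = (r:ℝ) * Real.pi := by
      show p.2 + (r:ℝ) * Real.pi - p.2 = (r:ℝ) * Real.pi
      ring
    constructor
    · refine ⟨r, ?_⟩
      rw [hxdiff, mul_div_assoc, div_self Real.pi_ne_zero, mul_one]
    · intro k hk hsin
      rw [hxdiff] at hsin
      obtain ⟨n, hn⟩ := Real.sin_eq_zero_iff.mp hsin
      have hrn : (r : ℝ) * Real.sqrt ((k:ℝ)^2 + q) = (n:ℝ) := by
        have hmul : ((r:ℝ) * Real.sqrt ((k:ℝ)^2 + q)) * Real.pi = (n:ℝ) * Real.pi := by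
          rw [hn]; ring
        exact mul_right_cancel₀ Real.pi_ne_zero hmul
      obtain ⟨j, hj⟩ := hMkey k hk r hr0 n hrn
      have hMQ : ((M:ℚ)) ≠ 0 := by
        have : (0:ℚ) < M := by exact_mod_cast hM
        exact this.ne'
      have hj2 : (m:ℚ) = (j:ℚ) * 2^(t+1) := by
        rw [hr, div_mul_eq_mul_div, div_eq_iff hDQ] at hj
        have hDcast : ((D:ℚ)) = 2^(t+1) * (M:ℚ) := by rw [hD]; push_cast; ring
        rw [hDcast] at hj
        have h3 : (m:ℚ) * M = ((j:ℚ) * 2^(t+1)) * M := by linear_combination hj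
        exact mul_right_cancel₀ hMQ h3
      have hj3 : m = j * 2^(t+1) := by exact_mod_cast hj2
      have heven : Even m := ⟨j * 2^t, by rw [hj3]; ring⟩
      exact (Int.not_odd_iff_even.mpr heven) hmodd
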